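/- Let U ⊆ ℝ^n be open and let P : U → ℝ^{n×r}, μ : U → ℝ^r and h₁ : U → ℝ^n be C^∞ with Dμ(z)P(z) invertible for every z ∈ U. Define Ψ₀(z) = (Dμ(z)P(z))^{-1}Dμ(z)h₁(z), Λ₀(z) = Dμ(z)P(z) and Λ₁(z) = DΨ₀(z)P(z). Then for every z ∈ U and every ε ∈ ℝ, with h(z,ε) = P(z)μ(z) + εh₁(z), the exact identity D(μ + εΨ₀)(z)·h(z,ε) − (Λ₀(z) + εΛ₁(z))·(μ(z) + εΨ₀(z)) = ε²(DΨ₀(z)h₁(z) − Λ₁(z)Ψ₀(z)) holds; that is, the invariance condition for the set {z : μ(z) + εΨ₀(z) = 0} is satisfied up to terms of order ε². Moreover, for any C^∞ matrix-valued map A : U → ℝ^{r×r}, (I_r + εA(z))·(μ(z) + εΨ₀(z)) = μ(z) + ε(Ψ₀(z) + A(z)μ(z)) + ε²A(z)Ψ₀(z), so the equations μ + ε(Ψ₀ + Aμ) = 0 and μ + εΨ₀ = 0 define the same set up to terms of order ε². -/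

import Mathlib

open Set Matrix

/-- Differentiability of determinant of a matrix-valued function with differentiable entries. -/
lemma diffAt_det {X : Type*} [NormedAddCommGroup X] [NormedSpace ℝ X] {m : ℕ}
    {M : X → Matrix (Fin m) (Fin m) ℝ} {z : X}
    (h : ∀ i j, DifferentiableAt ℝ (fun w => M w i j) z) :
    DifferentiableAt ℝ (fun w => (M w).det) z := by
  simp only [Matrix.det_apply']
  apply DifferentiableAt.fun_sum
  intro σ _
  apply DifferentiableAt.const_mul
  exact (HasFDerivAt.finset_prod (u := Finset.univ) (g := fun i w => M w (σ i) i)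
    fun i _ => (h (σ i) i).hasFDerivAt).differentiableAt

lemma diffAt_adjugate {X : Type*} [NormedAddCommGroup X] [NormedSpace ℝ X] {m : ℕ}
    {M : X → Matrix (Fin m) (Fin m) ℝ} {z : X}
    (h : ∀ i j, DifferentiableAt ℝ (fun w => M w i j) z) (i j : Fin m) :
    DifferentiableAt ℝ (fun w => (M w).adjugate i j) z := by
  simp only [Matrix.adjugate_apply]
  apply diffAt_det
  intro a b
  simp only [Matrix.updateRow_apply]
  split_ifs
  · exact differentiableAt_const _
  · exact h a b

lemma diffAt_inv {X : Type*} [NormedAddCommGroup X] [NormedSpace ℝ X] {m : ℕ}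
    {M : X → Matrix (Fin m) (Fin m) ℝ} {z : X}
    (h : ∀ i j, DifferentiableAt ℝ (fun w => M w i j) z)
    (hdet : (M z).det ≠ 0) (i j : Fin m) :
    DifferentiableAt ℝ (fun w => (M w)⁻¹ i j) z := by
  simp only [Matrix.inv_def, Ring.inverse_eq_inv, Matrix.smul_apply, smul_eq_mul]
  exact ((diffAt_det h).inv hdet).mul (diffAt_adjugate h i j)

/-- The Jacobian matrix of `μ : ℝ^n → ℝ^r` at `z` (entries `∂μ_k/∂z_j`). -/
noncomputable def jacobianMat (n r : ℕ) (μ : (Fin n → ℝ) → Fin r → ℝ)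
    (z : Fin n → ℝ) : Matrix (Fin r) (Fin n) ℝ :=
  Matrix.of fun k j => fderiv ℝ (fun w => μ w k) z (Pi.single j 1)

/-- First-order approximation of the slow manifold: with
`Ψ₀ = (DμP)⁻¹Dμh₁`, `Λ₀ = DμP`, `Λ₁ = DΨ₀P` and `h(z,ε) = P(z)μ(z) + εh₁(z)`, the exact
identity `D(μ+εΨ₀)·h − (Λ₀+εΛ₁)(μ+εΨ₀) = ε²(DΨ₀h₁ − Λ₁Ψ₀)` holds on `U`, so the invariance
condition for `{μ + εΨ₀ = 0}` is satisfied up to order `ε²`; moreover for any smooth `A`,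
`(I + εA)(μ + εΨ₀) = μ + ε(Ψ₀ + Aμ) + ε²AΨ₀`, exhibiting the gauge freedom. -/
theorem stmt10 (n r : ℕ) (U : Set (Fin n → ℝ)) (hU : IsOpen U)
    (P : (Fin n → ℝ) → Matrix (Fin n) (Fin r) ℝ)
    (μ : (Fin n → ℝ) → Fin r → ℝ) (h₁ : (Fin n → ℝ) → Fin n → ℝ)
    (hP : ContDiffOn ℝ (⊤ : ℕ∞) (fun z i j => P z i j) U)
    (hμ : ContDiffOn ℝ (⊤ : ℕ∞) μ U)
    (hh₁ : ContDiffOn ℝ (⊤ : ℕ∞) h₁ U)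
    (hinv : ∀ z ∈ U, IsUnit (jacobianMat n r μ z * P z)) :
    let Ψ₀ : (Fin n → ℝ) → Fin r → ℝ := fun z =>
      ((jacobianMat n r μ z * P z)⁻¹).mulVec ((jacobianMat n r μ z).mulVec (h₁ z))
    let Λ₀ : (Fin n → ℝ) → Matrix (Fin r) (Fin r) ℝ := fun z => jacobianMat n r μ z * P z
    let Λ₁ : (Fin n → ℝ) → Matrix (Fin r) (Fin r) ℝ := fun z => jacobianMat n r Ψ₀ z * P z
    let h : (Fin n → ℝ) → ℝ → Fin n → ℝ := fun z ε => (P z).mulVec (μ z) + ε • h₁ z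
    (∀ z ∈ U, ∀ ε : ℝ,
      (jacobianMat n r (fun w => μ w + ε • Ψ₀ w) z).mulVec (h z ε) -
          (Λ₀ z + ε • Λ₁ z).mulVec (μ z + ε • Ψ₀ z) =
        ε ^ 2 • ((jacobianMat n r Ψ₀ z).mulVec (h₁ z) - (Λ₁ z).mulVec (Ψ₀ z))) ∧
    ∀ A : (Fin n → ℝ) → Matrix (Fin r) (Fin r) ℝ,
      ContDiffOn ℝ (⊤ : ℕ∞) (fun z i j => A z i j) U →
      ∀ z ∈ U, ∀ ε : ℝ,
        ((1 : Matrix (Fin r) (Fin r) ℝ) + ε • A z).mulVec (μ z + ε • Ψ₀ z) =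
          μ z + ε • (Ψ₀ z + (A z).mulVec (μ z)) + ε ^ 2 • (A z).mulVec (Ψ₀ z) := by
  intro Ψ₀ Λ₀ Λ₁ h
  -- components of μ are smooth
  have hμk : ∀ k, ContDiffOn ℝ (⊤ : ℕ∞) (fun w => μ w k) U := fun k =>
    (ContinuousLinearMap.proj (R := ℝ) (φ := fun _ : Fin r => ℝ) k).contDiff.comp_contDiffOn hμ
  -- entries of the jacobian of μ are smooth on U
  have hJ : ∀ k j, ContDiffOn ℝ (⊤ : ℕ∞) (fun w => jacobianMat n r μ w k j) U := by
    intro k j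
    have h1 : ContDiffOn ℝ (⊤ : ℕ∞) (fun w => fderiv ℝ (fun v => μ v k) w) U :=
      (hμk k).fderiv_of_isOpen hU (by simp)
    exact (ContinuousLinearMap.apply ℝ ℝ (Pi.single j 1)).contDiff.comp_contDiffOn h1
  have hPk : ∀ i j, ContDiffOn ℝ (⊤ : ℕ∞) (fun w => P w i j) U := by
    intro i j
    exact contDiffOn_pi.mp (contDiffOn_pi.mp hP i) j
  have hhk : ∀ j, ContDiffOn ℝ (⊤ : ℕ∞) (fun w => h₁ w j) U := fun j =>
    contDiffOn_pi.mp hh₁ j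
  -- differentiability at points of U
  have dJ : ∀ z ∈ U, ∀ k j, DifferentiableAt ℝ (fun w => jacobianMat n r μ w k j) z :=
    fun z hz k j => ((hJ k j).differentiableOn (by simp)).differentiableAt (hU.mem_nhds hz)
  have dP : ∀ z ∈ U, ∀ i j, DifferentiableAt ℝ (fun w => P w i j) z :=
    fun z hz i j => ((hPk i j).differentiableOn (by simp)).differentiableAt (hU.mem_nhds hz)
  have dh : ∀ z ∈ U, ∀ j, DifferentiableAt ℝ (fun w => h₁ w j) z :=
    fun z hz j => ((hhk j).differentiableOn (by simp)).differentiableAt (hU.mem_nhds hz)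
  -- entries of J*P differentiable
  have dJP : ∀ z ∈ U, ∀ a b,
      DifferentiableAt ℝ (fun w => (jacobianMat n r μ w * P w) a b) z := by
    intro z hz a b
    simp only [Matrix.mul_apply]
    exact DifferentiableAt.fun_sum fun c _ => (dJ z hz a c).mul (dP z hz c b)
  have hdet : ∀ z ∈ U, (jacobianMat n r μ z * P z).det ≠ 0 := by
    intro z hz
    exact ((Matrix.isUnit_iff_isUnit_det _).mp (hinv z hz)).ne_zero
  -- components of Ψ₀ differentiable
  have dΨ : ∀ z ∈ U, ∀ k, DifferentiableAt ℝ (fun w => Ψ₀ w k) z := by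
    intro z hz k
    have heq : (fun w => Ψ₀ w k) = fun w => ∑ x, (∑ i, (jacobianMat n r μ w * P w)⁻¹ k i *
        jacobianMat n r μ w i x) * h₁ w x := by
      funext w
      show ((jacobianMat n r μ w * P w)⁻¹ *ᵥ jacobianMat n r μ w *ᵥ h₁ w) k = _
      rw [Matrix.mulVec_mulVec]
      simp [Matrix.mulVec, dotProduct, Matrix.mul_apply]
    rw [heq]
    exact DifferentiableAt.fun_sum fun x _ =>
      (DifferentiableAt.fun_sum fun i _ =>
        (diffAt_inv (dJP z hz) (hdet z hz) k i).mul (dJ z hz i x)).mul (dh z hz x)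
  constructor
  · intro z hz ε
    -- split the jacobian
    have hjac : jacobianMat n r (fun w => μ w + ε • Ψ₀ w) z =
        jacobianMat n r μ z + ε • jacobianMat n r Ψ₀ z := by
      ext k j
      simp only [jacobianMat, Matrix.of_apply, Matrix.add_apply, Matrix.smul_apply, smul_eq_mul]
      have e1 : (fun w => (μ w + ε • Ψ₀ w) k) = fun w => μ w k + ε * Ψ₀ w k := by
        funext w; simp [smul_eq_mul]
      have dμk : DifferentiableAt ℝ (fun w => μ w k) z :=
        (((hμk k)).differentiableOn (by simp)).differentiableAt (hU.mem_nhds hz)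
      rw [e1, fderiv_fun_add dμk ((dΨ z hz k).const_mul ε), fderiv_const_mul (dΨ z hz k) ε]
      simp [mul_comm]
    have key : (Λ₀ z).mulVec (Ψ₀ z) = (jacobianMat n r μ z).mulVec (h₁ z) := by
      show (jacobianMat n r μ z * P z).mulVec
        (((jacobianMat n r μ z * P z)⁻¹).mulVec ((jacobianMat n r μ z).mulVec (h₁ z))) = _
      rw [Matrix.mulVec_mulVec, Matrix.mul_nonsing_inv _ ((Matrix.isUnit_iff_isUnit_det _).mp
        (hinv z hz)), Matrix.one_mulVec]
    show (jacobianMat n r (fun w => μ w + ε • Ψ₀ w) z).mulVec ((P z).mulVec (μ z) + ε • h₁ z) -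
        (jacobianMat n r μ z * P z + ε • (jacobianMat n r Ψ₀ z * P z)).mulVec (μ z + ε • Ψ₀ z) =
        ε ^ 2 • ((jacobianMat n r Ψ₀ z).mulVec (h₁ z) - (jacobianMat n r Ψ₀ z * P z).mulVec (Ψ₀ z))
    rw [hjac]
    have key' : (jacobianMat n r μ z * P z).mulVec (Ψ₀ z) =
        (jacobianMat n r μ z).mulVec (h₁ z) := key
    simp only [Matrix.add_mulVec, Matrix.mulVec_add, Matrix.mulVec_smul,
      Matrix.smul_mulVec, Matrix.mulVec_mulVec, key', smul_add, smul_sub, smul_smul,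
      Matrix.add_mul, Matrix.smul_mul]
    module
  · intro A _ z hz ε
    simp only [Matrix.add_mulVec, Matrix.one_mulVec, Matrix.mulVec_add, Matrix.mulVec_smul,
      Matrix.smul_mulVec, smul_add, smul_smul]
    module
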